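/- Let N ≥ 1 and let γ, γ̄ be (1,2)-arrays over Fin N, symmetric in their lower indices. Define the Thomas parameters Π(γ)^μ_{αβ} = γ^μ_{αβ} − (1/(N+1))·(δ^μ_α · Σ_τ γ^τ_{βτ} + δ^μ_β · Σ_τ γ^τ_{ατ}), and likewise Π(γ̄). Then there exists ψ : Fin N → ℝ with γ̄^μ_{αβ} = γ^μ_{αβ} + ψ_α δ^μ_β + ψ_β δ^μ_α for all indices if and only if Π(γ̄)^μ_{αβ} = Π(γ)^μ_{αβ} for all indices. (This is the pointwise form of the first a-map invariance condition ⁽⁰⁾T = ⁽⁰⁾T̄ of Theorem 3, case 1.) -/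
import Mathlib


/-- Kronecker delta on `Fin N`. -/
def kron {N : ℕ} (μ α : Fin N) : ℝ := if μ = α then 1 else 0

/-- Thomas parameters of a symmetric (1,2)-array `γ`:
`Π(γ)^μ_{αβ} = γ^μ_{αβ} − (δ^μ_α Σ_τ γ^τ_{βτ} + δ^μ_β Σ_τ γ^τ_{ατ})/(N+1)`. -/
noncomputable def thomas {N : ℕ} (γ : Fin N → Fin N → Fin N → ℝ) (μ α β : Fin N) : ℝ :=
  γ μ α β - (1 / ((N : ℝ) + 1)) *
    (kron μ α * ∑ τ, γ τ β τ + kron μ β * ∑ τ, γ τ α τ)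

/-- two symmetric (1,2)-arrays are related by a projective
(a-map) deformation `γ̄^μ_{αβ} = γ^μ_{αβ} + ψ_(α δ^μ_β)` iff their Thomas
parameters coincide (the invariant `⁽⁰⁾T` of Theorem 3, case 1). -/
theorem stmt_5 (N : ℕ) (hN : 1 ≤ N)
    (γ γ' : Fin N → Fin N → Fin N → ℝ)
    (hγ : ∀ μ α β, γ μ α β = γ μ β α)
    (hγ' : ∀ μ α β, γ' μ α β = γ' μ β α) :
    (∃ ψ : Fin N → ℝ,
        ∀ μ α β, γ' μ α β = γ μ α β + ψ α * kron μ β + ψ β * kron μ α) ↔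
    (∀ μ α β, thomas γ' μ α β = thomas γ μ α β) := by
  have h1 : ((N : ℝ) + 1) ≠ 0 := by positivity
  constructor
  · rintro ⟨ψ, hψ⟩ μ α β
    have hsum : ∀ α, ∑ τ, γ' τ α τ = (∑ τ, γ τ α τ) + ((N : ℝ) + 1) * ψ α := by
      intro α
      simp only [hψ, kron, Finset.sum_add_distrib, mul_ite, mul_one, mul_zero,
        if_true]
      simp [Finset.sum_ite_eq', Finset.sum_const, Finset.card_univ]
      ring
    simp only [thomas]
    rw [hψ, hsum α, hsum β]
    field_simp
    ring
  · intro h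
    refine ⟨fun α => (1 / ((N : ℝ) + 1)) * ((∑ τ, γ' τ α τ) - ∑ τ, γ τ α τ), ?_⟩
    intro μ α β
    have := h μ α β
    simp only [thomas] at this
    linear_combination this
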